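/- Let α > 0, N ∈ ℤ, M > 0, and let B_N = {x ∈ ℚ_p : ‖x‖ ≤ p^N}. Define κ(x, y) = | ‖x‖^{α-1} - ‖y‖^{α-1} | if α ≠ 1, and κ(x, y) = log‖x‖ - log‖y‖ if α = 1 (for ‖y‖ < ‖x‖). Suppose w : B_N → ℂ is continuous and bounded and satisfies |w(x)| ≤ M ∫_{‖y‖ < ‖x‖} κ(x, y) |w(y)| dμ(y) for all x ∈ B_N with x ≠ 0, and w(0) = 0. Then w ≡ 0 on B_N. -/

import Mathlib

open MeasureTheory
open scoped ENNReal

open scoped Classical in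
/-- The kernel `κ(x,y)`: logarithmic for `α = 1`, of Riesz type otherwise. -/
noncomputable def kker (p : ℕ) [Fact p.Prime] (α : ℝ) (x y : ℚ_[p]) : ℝ :=
  if α = 1 then Real.log ‖x‖ - Real.log ‖y‖
  else |‖x‖ ^ (α - 1) - ‖y‖ ^ (α - 1)|

variable {p : ℕ} [Fact p.Prime] [MeasurableSpace ℚ_[p]] [BorelSpace ℚ_[p]]
  {μ : Measure ℚ_[p]} [μ.IsAddHaarMeasure]

lemma meas_ball (k : ℤ) : MeasurableSet {y : ℚ_[p] | ‖y‖ ≤ (p:ℝ) ^ k} :=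
  measurableSet_le (continuous_norm.measurable) measurable_const

lemma ball_step (k : ℤ) :
    μ {y : ℚ_[p] | ‖y‖ ≤ (p:ℝ) ^ (k+1)} = p * μ {y : ℚ_[p] | ‖y‖ ≤ (p:ℝ) ^ k} := by
  have hp1 : (1:ℝ) < p := Nat.one_lt_cast.mpr (Fact.out (p := p.Prime)).one_lt
  have hp0 : (0:ℝ) < p := lt_trans one_pos hp1
  have hpQ : (p:ℚ_[p]) ≠ 0 := by exact_mod_cast (Fact.out (p := p.Prime)).ne_zero
  set t : Fin p → ℚ_[p] := fun i => (i : ℚ_[p]) * (p:ℚ_[p]) ^ (-(k+1)) with ht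
  have htnorm : ∀ i j : Fin p, i ≠ j → ‖t i - t j‖ = (p:ℝ)^(k+1) := by
    intro i j hij
    have : t i - t j = ((i:ℤ) - (j:ℤ) : ℤ) * (p:ℚ_[p]) ^ (-(k+1)) := by
      push_cast [ht]; ring
    rw [this, norm_mul, Padic.norm_p_zpow, neg_neg]
    have h1 : ‖(((i:ℤ) - (j:ℤ) : ℤ) : ℚ_[p])‖ = 1 := by
      rcases lt_or_eq_of_le (Padic.norm_int_le_one (p := p) ((i:ℤ) - (j:ℤ))) with h | h
      · exfalso
        rw [Padic.norm_intCast_lt_one_iff] at h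
        have hne : (i:ℤ) - (j:ℤ) ≠ 0 := sub_ne_zero.mpr (by exact_mod_cast fun h => hij (Fin.ext (by exact_mod_cast h)))
        have hi : (i:ℤ) < p := by exact_mod_cast i.isLt
        have hj : (j:ℤ) < p := by exact_mod_cast j.isLt
        have hi0 : (0:ℤ) ≤ i := Int.ofNat_nonneg _
        have hj0 : (0:ℤ) ≤ j := Int.ofNat_nonneg _
        have habs : |(i:ℤ) - (j:ℤ)| < p := abs_lt.mpr ⟨by omega, by omega⟩
        have := Int.le_of_dvd (abs_pos.mpr hne) ((dvd_abs _ _).mpr h)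
        omega
      · exact h
    rw [h1, one_mul]
  set V : Fin p → Set ℚ_[p] := fun i => {y : ℚ_[p] | ‖y - t i‖ ≤ (p:ℝ)^k} with hV
  have hVmeas : ∀ i, MeasurableSet (V i) := fun i =>
    measurableSet_le ((continuous_norm.comp (continuous_id.sub continuous_const)).measurable) measurable_const
  have hVμ : ∀ i, μ (V i) = μ {y : ℚ_[p] | ‖y‖ ≤ (p:ℝ)^k} := by
    intro i
    have : V i = (fun y => -(t i) + y) ⁻¹' {y : ℚ_[p] | ‖y‖ ≤ (p:ℝ)^k} := by
      ext y; simp only [hV, Set.mem_preimage, Set.mem_setOf_eq, neg_add_eq_sub]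
    rw [this, measure_preimage_add]
  have hdisj : Pairwise (Function.onFun Disjoint V) := by
    intro i j hij
    simp only [Function.onFun]
    rw [Set.disjoint_left]
    intro y hyi hyj
    simp only [hV, Set.mem_setOf_eq] at hyi hyj
    have h1 : ‖t i - t j‖ ≤ (p:ℝ)^k := by
      have h2 : t i - t j = (t i - y) + (y - t j) := by ring
      rw [h2]
      refine le_trans (Padic.nonarchimedean _ _) (max_le ?_ ?_)
      · rw [norm_sub_rev]; exact hyi
      · exact hyj
    rw [htnorm i j hij] at h1
    have : (p:ℝ)^k < (p:ℝ)^(k+1) := zpow_lt_zpow_right₀ hp1 (by omega)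
    linarith
  have hpq : (p:ℚ_[p]) ^ (k+1) * (p:ℚ_[p]) ^ (-(k+1)) = 1 := by
    rw [← zpow_add₀ hpQ, show k+1+-(k+1) = 0 by ring, zpow_zero]
  have hunion : {y : ℚ_[p] | ‖y‖ ≤ (p:ℝ) ^ (k+1)} = ⋃ i, V i := by
    ext y
    simp only [Set.mem_setOf_eq, Set.mem_iUnion]
    constructor
    · intro hy
      set z : ℚ_[p] := y * (p:ℚ_[p]) ^ (k+1) with hz
      have hznorm : ‖z‖ ≤ 1 := by
        rw [hz, norm_mul, Padic.norm_p_zpow]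
        calc ‖y‖ * (p:ℝ)^(-(k+1)) ≤ (p:ℝ)^(k+1) * (p:ℝ)^(-(k+1)) := by
              apply mul_le_mul_of_nonneg_right hy (le_of_lt (zpow_pos hp0 _))
          _ = 1 := by rw [← zpow_add₀ (ne_of_gt hp0), show k+1+-(k+1) = 0 by ring, zpow_zero]
      set Z : ℤ_[p] := ⟨z, hznorm⟩ with hZ
      have happr := PadicInt.appr_spec 1 Z
      have hlt : Z.appr 1 < p := by simpa using PadicInt.appr_lt Z 1
      refine ⟨⟨Z.appr 1, hlt⟩, ?_⟩
      have hnorm : ‖Z - (Z.appr 1 : ℤ_[p])‖ ≤ (p:ℝ)^(-(1:ℤ)) := by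
        have := (PadicInt.norm_le_pow_iff_mem_span_pow (Z - (Z.appr 1 : ℤ_[p])) 1).mpr (by simpa using happr)
        simpa using this
      have hnormQ : ‖z - ((Z.appr 1 : ℕ) : ℚ_[p])‖ ≤ (p:ℝ)^(-(1:ℤ)) := by
        have hcoe : ((Z - (Z.appr 1 : ℤ_[p]) : ℤ_[p]) : ℚ_[p]) = z - ((Z.appr 1 : ℕ) : ℚ_[p]) := by
          push_cast [hZ]
          rfl
        rw [← hcoe]
        rw [PadicInt.padic_norm_e_of_padicInt]
        exact hnorm
      simp only [hV, Set.mem_setOf_eq, ht]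
      have hyt : y - ((Z.appr 1 : ℕ) : ℚ_[p]) * (p:ℚ_[p])^(-(k+1)) = (z - ((Z.appr 1 : ℕ) : ℚ_[p])) * (p:ℚ_[p])^(-(k+1)) := by
        rw [hz, sub_mul, mul_assoc, hpq, mul_one]
      rw [show ((⟨Z.appr 1, hlt⟩ : Fin p) : ℚ_[p]) = ((Z.appr 1 : ℕ) : ℚ_[p]) from rfl, hyt,
        norm_mul, Padic.norm_p_zpow, neg_neg]
      calc ‖z - ((Z.appr 1 : ℕ) : ℚ_[p])‖ * (p:ℝ)^(k+1)
          ≤ (p:ℝ)^(-(1:ℤ)) * (p:ℝ)^(k+1) := mul_le_mul_of_nonneg_right hnormQ (le_of_lt (zpow_pos hp0 _))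
        _ = (p:ℝ)^k := by rw [← zpow_add₀ (ne_of_gt hp0)]; norm_num
    · intro ⟨i, hi⟩
      simp only [hV, Set.mem_setOf_eq] at hi
      have hti : ‖t i‖ ≤ (p:ℝ)^(k+1) := by
        rw [ht]; simp only []
        rw [norm_mul, Padic.norm_p_zpow, neg_neg]
        calc ‖(i:ℚ_[p])‖ * (p:ℝ)^(k+1) ≤ 1 * (p:ℝ)^(k+1) := by
              apply mul_le_mul_of_nonneg_right _ (le_of_lt (zpow_pos hp0 _))
              exact_mod_cast Padic.norm_int_le_one (p := p) (i : ℤ)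
          _ = _ := one_mul _
      calc ‖y‖ = ‖(y - t i) + t i‖ := by ring_nf
        _ ≤ max ‖y - t i‖ ‖t i‖ := Padic.nonarchimedean _ _
        _ ≤ (p:ℝ)^(k+1) := max_le (le_trans hi (le_of_lt (zpow_lt_zpow_right₀ hp1 (by omega)))) hti
  rw [hunion, measure_iUnion hdisj hVmeas]
  simp only [hVμ]
  rw [tsum_fintype]
  simp [Finset.sum_const, mul_comm]


lemma ball_meas (hμ : μ {x : ℚ_[p] | ‖x‖ ≤ 1} = 1) (k : ℤ) :
    μ {y : ℚ_[p] | ‖y‖ ≤ (p:ℝ) ^ k} = ENNReal.ofReal ((p:ℝ) ^ k) := by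
  have hp0 : (0:ℝ) < p := by exact_mod_cast (Fact.out (p := p.Prime)).pos
  have hofp : (p:ℝ≥0∞) = ENNReal.ofReal (p:ℝ) := by simp
  have hE0 : (p:ℝ≥0∞) ≠ 0 := by exact_mod_cast (Fact.out (p := p.Prime)).ne_zero
  have hET : (p:ℝ≥0∞) ≠ ⊤ := ENNReal.natCast_ne_top p
  induction k using Int.induction_on with
  | zero => simpa using hμ
  | succ k ih =>
      rw [ball_step, ih, hofp, ← ENNReal.ofReal_mul (le_of_lt hp0)]
      congr 1
      rw [zpow_add_one₀ (ne_of_gt hp0)]; ring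
  | pred k ih =>
      have he2 : (-(k:ℤ)-1) = -((k:ℤ)+1) := by ring
      rw [he2]
      have hstep := ball_step (μ := μ) (-((k:ℤ)+1) : ℤ)
      have he : (-((k:ℤ)+1) : ℤ) + 1 = -(k:ℤ) := by ring
      rw [he, ih] at hstep
      refine (ENNReal.mul_right_inj hE0 hET).mp ?_
      rw [← hstep, hofp, ← ENNReal.ofReal_mul (le_of_lt hp0)]
      congr 1
      rw [← he, zpow_add_one₀ (ne_of_gt hp0)]; ring

lemma measurable_norm_rpow (p : ℕ) [Fact p.Prime] [MeasurableSpace ℚ_[p]] [BorelSpace ℚ_[p]]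
    (c : ℝ) : Measurable (fun y : ℚ_[p] => ‖y‖ ^ c) := by
  classical
  have h : (fun y : ℚ_[p] => ‖y‖ ^ c) = Set.piecewise ({0}: Set ℚ_[p]) (fun _ => (0:ℝ)^c)
      (fun y => Real.exp (c * Real.log ‖y‖)) := by
    funext y
    by_cases hy : y = 0
    · simp [hy]
    · rw [Set.piecewise_eq_of_notMem _ _ _ (by simpa using hy),
        Real.rpow_def_of_pos (norm_pos_iff.mpr hy), mul_comm]
  rw [h]
  exact Measurable.piecewise (measurableSet_singleton 0) measurable_const
    (Real.measurable_exp.comp ((Real.measurable_log.comp measurable_norm).const_mul c))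

lemma sum_helper {P : ℝ} (hP : 1 < P) (α β : ℝ) (n : ℤ) (g : ℕ → ℝ)
    (hgs : Summable g) (term : ℕ → ℝ) (hterm0 : ∀ j, 0 ≤ term j)
    (hbound : ∀ j, term j ≤ P ^ (((n:ℝ)-1)*β) * (P ^ ((n:ℝ)*α) * g j)) :
    Summable term ∧ ∑' j, term j ≤ (∑' j, g j) * P ^ (-β) * P ^ ((n:ℝ)*(α+β)) := by
  have hP0 : (0:ℝ) < P := lt_trans one_pos hP
  have h1 : Summable (fun j => P ^ (((n:ℝ)-1)*β) * (P ^ ((n:ℝ)*α) * g j)) :=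
    (hgs.mul_left _).mul_left _
  have hs : Summable term := Summable.of_nonneg_of_le hterm0 hbound h1
  refine ⟨hs, ?_⟩
  have e : P ^ (((n:ℝ)-1)*β) * P ^ ((n:ℝ)*α) = P ^ (-β) * P ^ ((n:ℝ)*(α+β)) := by
    rw [← Real.rpow_add hP0, ← Real.rpow_add hP0]
    congr 1; ring
  calc ∑' j, term j ≤ ∑' j, P ^ (((n:ℝ)-1)*β) * (P ^ ((n:ℝ)*α) * g j) :=
        hs.tsum_le_tsum hbound h1
    _ = P ^ (((n:ℝ)-1)*β) * (P ^ ((n:ℝ)*α) * ∑' j, g j) := by rw [tsum_mul_left, tsum_mul_left]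
    _ = (P ^ (((n:ℝ)-1)*β) * P ^ ((n:ℝ)*α)) * ∑' j, g j := by ring
    _ = (∑' j, g j) * P ^ (-β) * P ^ ((n:ℝ)*(α+β)) := by rw [e]; ring

lemma meas_zero (hμ : μ {x : ℚ_[p] | ‖x‖ ≤ 1} = 1) : μ ({0} : Set ℚ_[p]) = 0 := by
  have hp1 : (1:ℝ) < p := Nat.one_lt_cast.mpr (Fact.out (p := p.Prime)).one_lt
  have hp0 : (0:ℝ) < p := lt_trans one_pos hp1
  have h : ∀ k : ℕ, μ ({0} : Set ℚ_[p]) ≤ ENNReal.ofReal ((p:ℝ) ^ (-(k:ℤ))) := by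
    intro k
    rw [← ball_meas hμ]
    apply measure_mono
    intro y hy
    simp only [Set.mem_singleton_iff] at hy
    simp [hy, le_of_lt (zpow_pos hp0 _)]
  have htend : Filter.Tendsto (fun k : ℕ => ENNReal.ofReal ((p:ℝ) ^ (-(k:ℤ)))) Filter.atTop (nhds 0) := by
    have h1 : Filter.Tendsto (fun k : ℕ => ((p:ℝ)⁻¹) ^ k) Filter.atTop (nhds 0) :=
      tendsto_pow_atTop_nhds_zero_of_lt_one (by positivity) (by
        rw [inv_lt_one_iff₀]; right; exact hp1)
    have h2 : (fun k : ℕ => ENNReal.ofReal ((p:ℝ) ^ (-(k:ℤ)))) = fun k : ℕ => ENNReal.ofReal (((p:ℝ)⁻¹) ^ k) := by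
      funext k
      congr 1
      rw [zpow_neg, inv_pow, zpow_natCast]
    rw [h2]
    have := (ENNReal.continuous_ofReal.tendsto 0).comp h1
    simpa [Function.comp_def] using this
  have := ge_of_tendsto' htend h
  exact le_antisymm this zero_le

lemma kker_key (hμ : μ {x : ℚ_[p] | ‖x‖ ≤ 1} = 1) (α : ℝ) (hα : 0 < α) :
    ∃ A : ℝ, 0 < A ∧ ∀ β : ℝ, 0 ≤ β → ∀ x : ℚ_[p], x ≠ 0 →
      IntegrableOn (fun y => kker p α x y * ‖y‖ ^ β) {y : ℚ_[p] | ‖y‖ < ‖x‖} μ ∧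
      ∫ y in {y : ℚ_[p] | ‖y‖ < ‖x‖}, kker p α x y * ‖y‖ ^ β ∂μ
        ≤ A * (p:ℝ) ^ (-β) * ‖x‖ ^ (α + β) := by
  have hp1 : (1:ℝ) < p := Nat.one_lt_cast.mpr (Fact.out (p := p.Prime)).one_lt
  have hp0 : (0:ℝ) < p := lt_trans one_pos hp1
  obtain ⟨g, hgs, hg0, hgd⟩ :
      ∃ g : ℕ → ℝ, Summable g ∧ (∀ j, 0 ≤ g j) ∧
        ∀ (n : ℤ) (j : ℕ),
          (if α = 1 then ((j:ℝ)+1) * Real.log p else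
            |(p:ℝ) ^ ((n:ℝ)*(α-1)) - (p:ℝ) ^ (((n:ℝ)-1-(j:ℝ))*(α-1))|) * (p:ℝ) ^ ((n:ℝ)-1-(j:ℝ))
            ≤ (p:ℝ) ^ ((n:ℝ)*α) * g j := by
    have hlog0 : (0:ℝ) ≤ Real.log p := Real.log_nonneg hp1.le
    by_cases hα1 : α = 1
    · refine ⟨fun j => Real.log p * (((j:ℝ)+1) * ((p:ℝ)⁻¹)^(j+1)), ?_, ?_, ?_⟩
      · apply Summable.mul_left
        have h0 : Summable (fun m : ℕ => (m:ℝ)^(1:ℕ) * ((p:ℝ)⁻¹)^m) :=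
          summable_pow_mul_geometric_of_norm_lt_one 1 (by
            rw [Real.norm_eq_abs, abs_of_nonneg (by positivity)]
            rw [inv_lt_one_iff₀]; right; exact hp1)
        have h1 := h0.comp_injective Nat.succ_injective
        refine h1.congr fun j => ?_
        simp [Function.comp, pow_one]
      · intro j; positivity
      · intro n j
        rw [if_pos hα1, hα1]
        have e1 : (p:ℝ)^((n:ℝ)-1-(j:ℝ)) = (p:ℝ)^((n:ℝ)) * ((p:ℝ)⁻¹)^(j+1) := by
          rw [show (n:ℝ)-1-(j:ℝ) = (n:ℝ) + (-(((j+1:ℕ)):ℝ)) by push_cast; ring,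
            Real.rpow_add hp0, Real.rpow_neg hp0.le, Real.rpow_natCast, inv_pow]
        apply le_of_eq
        rw [e1, mul_one]
        ring
    · rcases lt_or_gt_of_ne (fun h => hα1 h) with hlt | hgt
      · -- α < 1
        set ρ : ℝ := (p:ℝ)^(-α) with hρ
        have hρ0 : 0 ≤ ρ := Real.rpow_nonneg hp0.le _
        have hρ1 : ρ < 1 := Real.rpow_lt_one_of_one_lt_of_neg hp1 (by linarith)
        refine ⟨fun j => ρ^(j+1), ?_, fun j => pow_nonneg hρ0 _, ?_⟩
        · exact ((summable_geometric_of_lt_one hρ0 hρ1).mul_right ρ).congr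
            fun j => (pow_succ ρ j).symm
        · intro n j
          rw [if_neg hα1]
          have hab : (p:ℝ)^((n:ℝ)*(α-1)) ≤ (p:ℝ)^(((n:ℝ)-1-(j:ℝ))*(α-1)) := by
            apply Real.rpow_le_rpow_of_exponent_le hp1.le
            have hj : (0:ℝ) ≤ (j:ℝ) := Nat.cast_nonneg j
            nlinarith
          have habs : |(p:ℝ)^((n:ℝ)*(α-1)) - (p:ℝ)^(((n:ℝ)-1-(j:ℝ))*(α-1))|
              ≤ (p:ℝ)^(((n:ℝ)-1-(j:ℝ))*(α-1)) := by
            rw [abs_of_nonpos (sub_nonpos.mpr hab)]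
            have := Real.rpow_nonneg hp0.le ((n:ℝ)*(α-1))
            linarith
          calc |(p:ℝ)^((n:ℝ)*(α-1)) - (p:ℝ)^(((n:ℝ)-1-(j:ℝ))*(α-1))| * (p:ℝ)^((n:ℝ)-1-(j:ℝ))
              ≤ (p:ℝ)^(((n:ℝ)-1-(j:ℝ))*(α-1)) * (p:ℝ)^((n:ℝ)-1-(j:ℝ)) :=
                mul_le_mul_of_nonneg_right habs (Real.rpow_nonneg hp0.le _)
            _ = (p:ℝ)^((n:ℝ)*α) * ρ^(j+1) := by
                have e2 : ρ^(j+1) = (p:ℝ)^((-α)*((j:ℝ)+1)) := by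
                  rw [hρ, ← Real.rpow_natCast ((p:ℝ)^(-α)) (j+1), ← Real.rpow_mul hp0.le]
                  push_cast
                  ring_nf
                rw [e2, ← Real.rpow_add hp0, ← Real.rpow_add hp0]
                congr 1
                ring
      · -- 1 < α
        have hr0 : (0:ℝ) ≤ (p:ℝ)⁻¹ := by positivity
        have hr1 : (p:ℝ)⁻¹ < 1 := by rw [inv_lt_one_iff₀]; right; exact hp1
        refine ⟨fun j => ((p:ℝ)⁻¹)^(j+1), ?_, fun j => pow_nonneg hr0 _, ?_⟩
        · exact ((summable_geometric_of_lt_one hr0 hr1).mul_right _).congr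
            fun j => (pow_succ _ j).symm
        · intro n j
          rw [if_neg hα1]
          have hab : (p:ℝ)^(((n:ℝ)-1-(j:ℝ))*(α-1)) ≤ (p:ℝ)^((n:ℝ)*(α-1)) := by
            apply Real.rpow_le_rpow_of_exponent_le hp1.le
            have hj : (0:ℝ) ≤ (j:ℝ) := Nat.cast_nonneg j
            nlinarith
          have habs : |(p:ℝ)^((n:ℝ)*(α-1)) - (p:ℝ)^(((n:ℝ)-1-(j:ℝ))*(α-1))|
              ≤ (p:ℝ)^((n:ℝ)*(α-1)) := by
            rw [abs_of_nonneg (sub_nonneg.mpr hab)]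
            have := Real.rpow_nonneg hp0.le (((n:ℝ)-1-(j:ℝ))*(α-1))
            linarith
          calc |(p:ℝ)^((n:ℝ)*(α-1)) - (p:ℝ)^(((n:ℝ)-1-(j:ℝ))*(α-1))| * (p:ℝ)^((n:ℝ)-1-(j:ℝ))
              ≤ (p:ℝ)^((n:ℝ)*(α-1)) * (p:ℝ)^((n:ℝ)-1-(j:ℝ)) :=
                mul_le_mul_of_nonneg_right habs (Real.rpow_nonneg hp0.le _)
            _ = (p:ℝ)^((n:ℝ)*α) * ((p:ℝ)⁻¹)^(j+1) := by
                have e2 : ((p:ℝ)⁻¹)^(j+1) = (p:ℝ)^(-((j:ℝ)+1)) := by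
                  rw [show -((j:ℝ)+1) = -(((j+1:ℕ)):ℝ) by push_cast; ring,
                    Real.rpow_neg hp0.le, Real.rpow_natCast, inv_pow]
                rw [e2, ← Real.rpow_add hp0, ← Real.rpow_add hp0]
                congr 1
                ring
  have htg : 0 ≤ ∑' j, g j := tsum_nonneg hg0
  refine ⟨(∑' j, g j) + 1, by linarith, ?_⟩
  intro β hβ x hx
  set n : ℤ := -x.valuation with hn
  have hxn : ‖x‖ = (p:ℝ) ^ (n:ℤ) := Padic.norm_eq_zpow_neg_valuation hx
  have hxr : ∀ c : ℝ, ‖x‖ ^ c = (p:ℝ) ^ ((n:ℝ)*c) := by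
    intro c
    rw [hxn, ← Real.rpow_intCast, ← Real.rpow_mul hp0.le]
  set U := {y : ℚ_[p] | ‖y‖ < ‖x‖} with hU
  have hUmeas : MeasurableSet U := measurableSet_lt continuous_norm.measurable measurable_const
  set f := fun y : ℚ_[p] => kker p α x y * ‖y‖ ^ β with hf
  have hfm : Measurable f := by
    by_cases hα1 : α = 1
    · have h : f = fun y => (Real.log ‖x‖ - Real.log ‖y‖) * ‖y‖ ^ β := by
        funext y; simp [hf, kker, hα1]
      rw [h]
      exact (measurable_const.sub (Real.measurable_log.comp measurable_norm)).mul
        (measurable_norm_rpow p β)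
    · have h : f = fun y => |‖x‖ ^ (α-1) - ‖y‖ ^ (α-1)| * ‖y‖ ^ β := by
        funext y; simp [hf, kker, hα1]
      rw [h]
      exact ((measurable_const.sub (measurable_norm_rpow p (α-1))).abs).mul
        (measurable_norm_rpow p β)
  have hμ0 : μ ({0} : Set ℚ_[p]) = 0 := meas_zero hμ
  have hae0 : ∀ᵐ y ∂μ.restrict U, y ≠ 0 := by
    have hset : {y : ℚ_[p] | ¬ y ≠ 0} = {0} := by ext y; simp
    rw [Filter.eventually_iff, ← Filter.eventually_iff, ae_iff, hset]
    exact le_antisymm ((Measure.restrict_apply_le _ _).trans hμ0.le) zero_le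
  have hknn : ∀ y : ℚ_[p], y ∈ U → y ≠ 0 → 0 ≤ kker p α x y := by
    intro y hyU hy0
    by_cases hα1 : α = 1
    · have h : kker p α x y = Real.log ‖x‖ - Real.log ‖y‖ := by simp [kker, hα1]
      rw [h]
      exact sub_nonneg.mpr (Real.log_le_log (norm_pos_iff.mpr hy0) (le_of_lt hyU))
    · have h : kker p α x y = |‖x‖ ^ (α-1) - ‖y‖ ^ (α-1)| := by simp [kker, hα1]
      rw [h]; exact abs_nonneg _
  have hfnn : 0 ≤ᵐ[μ.restrict U] f := by
    filter_upwards [ae_restrict_mem hUmeas, hae0] with y hyU hy0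
    exact mul_nonneg (hknn y hyU hy0) (Real.rpow_nonneg (norm_nonneg y) β)
  set κc : ℕ → ℝ := fun j => if α = 1 then ((j:ℝ)+1) * Real.log p else
      |(p:ℝ) ^ ((n:ℝ)*(α-1)) - (p:ℝ) ^ (((n:ℝ)-1-(j:ℝ))*(α-1))| with hκc
  set term : ℕ → ℝ := fun j =>
      κc j * (p:ℝ) ^ (((n:ℝ)-1-(j:ℝ))*β) * (p:ℝ) ^ ((n:ℝ)-1-(j:ℝ)) with hterm
  have hκc0 : ∀ j, 0 ≤ κc j := by
    intro j
    rw [hκc]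
    by_cases hα1 : α = 1
    · simp only [if_pos hα1]
      have : (0:ℝ) ≤ Real.log p := Real.log_nonneg hp1.le
      positivity
    · simp only [if_neg hα1]
      exact abs_nonneg _
  have hterm0 : ∀ j, 0 ≤ term j := by
    intro j
    rw [hterm]
    have := hκc0 j
    have h1 : (0:ℝ) ≤ (p:ℝ) ^ (((n:ℝ)-1-(j:ℝ))*β) := Real.rpow_nonneg hp0.le _
    have h2 : (0:ℝ) ≤ (p:ℝ) ^ ((n:ℝ)-1-(j:ℝ)) := Real.rpow_nonneg hp0.le _
    positivity
  have hPk : ∀ j : ℕ, (p:ℝ) ^ ((n - 1 - (j:ℕ) : ℤ)) = (p:ℝ) ^ ((n:ℝ)-1-(j:ℝ)) := by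
    intro j
    rw [← Real.rpow_intCast]
    congr 1
    push_cast; ring
  have hfval : ∀ (j : ℕ) (y : ℚ_[p]), ‖y‖ = (p:ℝ) ^ ((n - 1 - (j:ℕ) : ℤ)) →
      f y = κc j * (p:ℝ) ^ (((n:ℝ)-1-(j:ℝ))*β) := by
    intro j y hy
    have hy0 : y ≠ 0 := by
      intro h
      rw [h, norm_zero] at hy
      exact absurd hy.symm (ne_of_gt (zpow_pos hp0 _))
    have hyr : ∀ c : ℝ, ‖y‖ ^ c = (p:ℝ) ^ (((n:ℝ)-1-(j:ℝ))*c) := by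
      intro c
      rw [hy, hPk j, ← Real.rpow_mul hp0.le]
    have hylog : Real.log ‖y‖ = ((n:ℝ)-1-(j:ℝ)) * Real.log p := by
      rw [hy, hPk j, Real.log_rpow hp0]
    have hxlog : Real.log ‖x‖ = (n:ℝ) * Real.log p := by
      rw [hxn, ← Real.rpow_intCast, Real.log_rpow hp0]
    by_cases hα1 : α = 1
    · have h : f y = (Real.log ‖x‖ - Real.log ‖y‖) * ‖y‖ ^ β := by simp [hf, kker, hα1]
      rw [h, hxlog, hylog, hyr β, hκc]
      simp only [if_pos hα1]
      ring
    · have h : f y = |‖x‖ ^ (α-1) - ‖y‖ ^ (α-1)| * ‖y‖ ^ β := by simp [hf, kker, hα1]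
      rw [h, hxr (α-1), hyr (α-1), hyr β, hκc]
      simp only [if_neg hα1]
  have hgd' : ∀ j, κc j * (p:ℝ) ^ ((n:ℝ)-1-(j:ℝ)) ≤ (p:ℝ) ^ ((n:ℝ)*α) * g j := by
    intro j
    have := hgd n j
    rw [hκc]
    exact this
  have hbound : ∀ j, term j ≤ (p:ℝ) ^ (((n:ℝ)-1)*β) * ((p:ℝ) ^ ((n:ℝ)*α) * g j) := by
    intro j
    have h1 : (p:ℝ) ^ (((n:ℝ)-1-(j:ℝ))*β) ≤ (p:ℝ) ^ (((n:ℝ)-1)*β) := by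
      apply Real.rpow_le_rpow_of_exponent_le hp1.le
      have : (0:ℝ) ≤ (j:ℝ) := Nat.cast_nonneg j
      nlinarith
    calc term j = (κc j * (p:ℝ) ^ ((n:ℝ)-1-(j:ℝ))) * (p:ℝ) ^ (((n:ℝ)-1-(j:ℝ))*β) := by
          rw [hterm]; ring
      _ ≤ ((p:ℝ) ^ ((n:ℝ)*α) * g j) * (p:ℝ) ^ (((n:ℝ)-1)*β) := by
          apply mul_le_mul (hgd' j) h1 (Real.rpow_nonneg hp0.le _)
          have h3 : (0:ℝ) ≤ (p:ℝ) ^ ((n:ℝ)*α) := Real.rpow_nonneg hp0.le _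
          exact mul_nonneg h3 (hg0 j)
      _ = (p:ℝ) ^ (((n:ℝ)-1)*β) * ((p:ℝ) ^ ((n:ℝ)*α) * g j) := by ring
  obtain ⟨hterm_sum, hterm_bound⟩ := sum_helper hp1 α β n g hgs term hterm0 hbound
  have hL : ∫⁻ y in U, ENNReal.ofReal (f y) ∂μ
      ≤ ENNReal.ofReal ((∑' j, g j) * (p:ℝ) ^ (-β) * (p:ℝ) ^ ((n:ℝ)*(α+β))) := by
    set S : ℕ → Set ℚ_[p] := fun j => {y : ℚ_[p] | ‖y‖ = (p:ℝ) ^ ((n - 1 - (j:ℕ) : ℤ))} with hS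
    have hSmeas : ∀ j, MeasurableSet (S j) :=
      fun j => measurableSet_eq_fun continuous_norm.measurable measurable_const
    have hsub : U ⊆ (⋃ j, S j) ∪ {0} := by
      intro y hyU
      by_cases hy0 : y = 0
      · exact Set.mem_union_right _ (by simp [hy0])
      · left
        have hym : ‖y‖ = (p:ℝ) ^ ((-y.valuation : ℤ)) := Padic.norm_eq_zpow_neg_valuation hy0
        have hmn : -y.valuation < n := by
          have h2 : ‖y‖ < ‖x‖ := hyU
          rw [hym, hxn] at h2
          exact (zpow_lt_zpow_iff_right₀ hp1).mp h2
        refine Set.mem_iUnion.mpr ⟨(n - 1 - (-y.valuation)).toNat, ?_⟩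
        simp only [hS, Set.mem_setOf_eq]
        rw [hym]
        congr 1
        rw [Int.toNat_of_nonneg (by omega)]
        ring
    have hsphere : ∀ j, ∫⁻ y in S j, ENNReal.ofReal (f y) ∂μ ≤ ENNReal.ofReal (term j) := by
      intro j
      have hval : ∀ y ∈ S j, ENNReal.ofReal (f y)
          ≤ ENNReal.ofReal (κc j * (p:ℝ) ^ (((n:ℝ)-1-(j:ℝ))*β)) := by
        intro y hy
        exact le_of_eq (congrArg ENNReal.ofReal (hfval j y hy))
      have hc0 : 0 ≤ κc j * (p:ℝ) ^ (((n:ℝ)-1-(j:ℝ))*β) :=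
        mul_nonneg (hκc0 j) (Real.rpow_nonneg hp0.le _)
      calc ∫⁻ y in S j, ENNReal.ofReal (f y) ∂μ
          ≤ ∫⁻ _ in S j, ENNReal.ofReal (κc j * (p:ℝ) ^ (((n:ℝ)-1-(j:ℝ))*β)) ∂μ :=
            setLIntegral_mono' (hSmeas j) hval
        _ = ENNReal.ofReal (κc j * (p:ℝ) ^ (((n:ℝ)-1-(j:ℝ))*β)) * μ (S j) :=
            setLIntegral_const _ _
        _ ≤ ENNReal.ofReal (κc j * (p:ℝ) ^ (((n:ℝ)-1-(j:ℝ))*β))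
              * ENNReal.ofReal ((p:ℝ) ^ ((n - 1 - (j:ℕ) : ℤ))) := by
            apply mul_le_mul_right
            rw [← ball_meas hμ]
            apply measure_mono
            intro y hy
            simp only [hS, Set.mem_setOf_eq] at hy ⊢
            exact le_of_eq hy
        _ = ENNReal.ofReal (term j) := by
            rw [← ENNReal.ofReal_mul hc0, hPk j, hterm]
    calc ∫⁻ y in U, ENNReal.ofReal (f y) ∂μ
        ≤ ∫⁻ y in (⋃ j, S j) ∪ {0}, ENNReal.ofReal (f y) ∂μ := lintegral_mono_set hsub
      _ ≤ (∫⁻ y in ⋃ j, S j, ENNReal.ofReal (f y) ∂μ)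
            + ∫⁻ y in {0}, ENNReal.ofReal (f y) ∂μ := lintegral_union_le _ _ _
      _ = ∫⁻ y in ⋃ j, S j, ENNReal.ofReal (f y) ∂μ := by
          rw [setLIntegral_measure_zero _ _ hμ0, add_zero]
      _ ≤ ∑' j, ∫⁻ y in S j, ENNReal.ofReal (f y) ∂μ := lintegral_iUnion_le _ _
      _ ≤ ∑' j, ENNReal.ofReal (term j) := ENNReal.tsum_le_tsum hsphere
      _ = ENNReal.ofReal (∑' j, term j) :=
          (ENNReal.ofReal_tsum_of_nonneg hterm0 hterm_sum).symm
      _ ≤ _ := ENNReal.ofReal_le_ofReal hterm_bound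
  have hInt : IntegrableOn f U μ := by
    refine ⟨hfm.aestronglyMeasurable, ?_⟩
    have heq : ∫⁻ y in U, ‖f y‖ₑ ∂μ = ∫⁻ y in U, ENNReal.ofReal (f y) ∂μ :=
      lintegral_congr_ae (hfnn.mono fun y hy => Real.enorm_eq_ofReal hy)
    rw [HasFiniteIntegral, heq]
    exact lt_of_le_of_lt hL ENNReal.ofReal_lt_top
  refine ⟨hInt, ?_⟩
  have hIeq : ∫ y in U, f y ∂μ = (∫⁻ y in U, ENNReal.ofReal (f y) ∂μ).toReal :=
    integral_eq_lintegral_of_nonneg_ae hfnn hfm.aestronglyMeasurable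
  rw [hIeq]
  apply ENNReal.toReal_le_of_le_ofReal
  · have h1 : (0:ℝ) ≤ (p:ℝ) ^ (-β) := Real.rpow_nonneg hp0.le _
    have h2 : (0:ℝ) ≤ ‖x‖ ^ (α+β) := Real.rpow_nonneg (norm_nonneg x) _
    have h3 : (0:ℝ) < (∑' j, g j) + 1 := by linarith
    positivity
  · refine hL.trans (ENNReal.ofReal_le_ofReal ?_)
    rw [hxr (α+β)]
    have h1 : (0:ℝ) ≤ (p:ℝ) ^ (-β) := Real.rpow_nonneg hp0.le _
    have h2 : (0:ℝ) ≤ (p:ℝ) ^ ((n:ℝ)*(α+β)) := Real.rpow_nonneg hp0.le _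
    nlinarith [mul_nonneg h1 h2]

lemma kker_nonneg (α : ℝ) {x y : ℚ_[p]} (h : ‖y‖ < ‖x‖) (hy : y ≠ 0) :
    0 ≤ kker p α x y := by
  by_cases hα1 : α = 1
  · have he : kker p α x y = Real.log ‖x‖ - Real.log ‖y‖ := by simp [kker, hα1]
    rw [he]
    exact sub_nonneg.mpr (Real.log_le_log (norm_pos_iff.mpr hy) (le_of_lt h))
  · have he : kker p α x y = |‖x‖ ^ (α-1) - ‖y‖ ^ (α-1)| := by simp [kker, hα1]
    rw [he]; exact abs_nonneg _

theorem iteration_forces_zero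
    (p : ℕ) [Fact p.Prime]
    [MeasurableSpace ℚ_[p]] [BorelSpace ℚ_[p]]
    (μ : Measure ℚ_[p]) [μ.IsAddHaarMeasure]
    (hμ : μ {x : ℚ_[p] | ‖x‖ ≤ 1} = 1)
    (α : ℝ) (hα : 0 < α) (N : ℤ) (M : ℝ) (hM : 0 < M)
    (w : ℚ_[p] → ℂ)
    (hcont : ContinuousOn w {x : ℚ_[p] | ‖x‖ ≤ (p : ℝ) ^ N})
    (hbdd : ∃ B : ℝ, ∀ x : ℚ_[p], ‖x‖ ≤ (p : ℝ) ^ N → ‖w x‖ ≤ B)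
    (hw0 : w 0 = 0)
    (hineq : ∀ x : ℚ_[p], ‖x‖ ≤ (p : ℝ) ^ N → x ≠ 0 →
      ‖w x‖ ≤ M * ∫ y in {y : ℚ_[p] | ‖y‖ < ‖x‖}, kker p α x y * ‖w y‖ ∂μ) :
    ∀ x : ℚ_[p], ‖x‖ ≤ (p : ℝ) ^ N → w x = 0 := by
  have hp1 : (1:ℝ) < p := Nat.one_lt_cast.mpr (Fact.out (p := p.Prime)).one_lt
  have hp0 : (0:ℝ) < p := lt_trans one_pos hp1
  obtain ⟨B0, hB⟩ := hbdd
  set B := max B0 0 with hBdef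
  have hB' : ∀ y : ℚ_[p], ‖y‖ ≤ (p:ℝ)^N → ‖w y‖ ≤ B :=
    fun y hy => (hB y hy).trans (le_max_left _ _)
  have hB0 : 0 ≤ B := le_max_right _ _
  obtain ⟨A, hA, hkey⟩ := kker_key hμ α hα
  set D : ℕ → ℝ := fun m =>
    (Nat.rec B (fun k Dk => M * A * (p:ℝ) ^ (-(α*(k:ℝ))) * Dk) m : ℝ) with hD
  have hDs : ∀ m : ℕ, D (m+1) = M * A * (p:ℝ) ^ (-(α*(m:ℝ))) * D m := fun m => rfl
  have hDnn : ∀ m, 0 ≤ D m := by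
    intro m
    induction m with
    | zero => exact hB0
    | succ m ih =>
        rw [hDs]
        have h1 : (0:ℝ) ≤ (p:ℝ) ^ (-(α*(m:ℝ))) := Real.rpow_nonneg hp0.le _
        positivity
  have hμ0 : μ ({0} : Set ℚ_[p]) = 0 := meas_zero hμ
  have claim : ∀ m : ℕ, ∀ y : ℚ_[p], ‖y‖ ≤ (p:ℝ)^N → ‖w y‖ ≤ D m * ‖y‖ ^ (α*(m:ℝ)) := by
    intro m
    induction m with
    | zero =>
        intro y hy
        simp only [Nat.cast_zero, mul_zero, Real.rpow_zero, mul_one]; exact hB' y hy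
    | succ m ih =>
        intro y hy
        by_cases hy0 : y = 0
        · rw [hy0, hw0]
          have : ((0:ℝ)) ^ (α*((m+1:ℕ):ℝ)) = 0 :=
            Real.zero_rpow (ne_of_gt (mul_pos hα (by exact_mod_cast Nat.succ_pos m)))
          rw [norm_zero, norm_zero, this, mul_zero]
        · have h1 := hineq y hy hy0
          obtain ⟨hint, hbnd⟩ := hkey (α*(m:ℝ)) (by positivity) y hy0
          set U := {z : ℚ_[p] | ‖z‖ < ‖y‖} with hUdef
          have hUmeas : MeasurableSet U :=
            measurableSet_lt continuous_norm.measurable measurable_const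
          have hae0 : ∀ᵐ z ∂μ.restrict U, z ≠ 0 := by
            have hset : {z : ℚ_[p] | ¬ z ≠ 0} = {0} := by ext z; simp
            rw [Filter.eventually_iff, ← Filter.eventually_iff, ae_iff, hset]
            exact le_antisymm ((Measure.restrict_apply_le _ _).trans hμ0.le) zero_le
          have hmono : ∫ z in U, kker p α y z * ‖w z‖ ∂μ
              ≤ ∫ z in U, D m * (kker p α y z * ‖z‖ ^ (α*(m:ℝ))) ∂μ := by
            apply integral_mono_of_nonneg
            · filter_upwards [ae_restrict_mem hUmeas, hae0] with z hzU hz0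
              exact mul_nonneg (kker_nonneg α hzU hz0) (norm_nonneg _)
            · exact hint.const_mul _
            · filter_upwards [ae_restrict_mem hUmeas, hae0] with z hzU hz0
              have hzball : ‖z‖ ≤ (p:ℝ)^N := le_trans (le_of_lt hzU) hy
              have hk0 := kker_nonneg α (x := y) hzU hz0
              have hwz := ih z hzball
              calc kker p α y z * ‖w z‖ ≤ kker p α y z * (D m * ‖z‖ ^ (α*(m:ℝ))) :=
                    mul_le_mul_of_nonneg_left hwz hk0
                _ = D m * (kker p α y z * ‖z‖ ^ (α*(m:ℝ))) := by ring
          have h2 : ∫ z in U, D m * (kker p α y z * ‖z‖ ^ (α*(m:ℝ))) ∂μ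
              = D m * ∫ z in U, kker p α y z * ‖z‖ ^ (α*(m:ℝ)) ∂μ :=
            integral_const_mul _ _
          have h3 : ‖w y‖ ≤ M * (D m * (A * (p:ℝ) ^ (-(α*(m:ℝ))) * ‖y‖ ^ (α + α*(m:ℝ)))) := by
            refine h1.trans ?_
            apply mul_le_mul_of_nonneg_left _ hM.le
            rw [← hUdef] at *
            refine hmono.trans ?_
            rw [h2]
            exact mul_le_mul_of_nonneg_left hbnd (hDnn m)
          refine h3.trans (le_of_eq ?_)
          rw [hDs]
          have he : α * ((m+1:ℕ):ℝ) = α + α*(m:ℝ) := by push_cast; ring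
          rw [he]
          ring
  intro x hxball
  have hwx : ∀ m : ℕ, ‖w x‖ ≤ D m * ((p:ℝ)^(N:ℤ)) ^ (α*(m:ℝ)) := by
    intro m
    refine (claim m x hxball).trans ?_
    exact mul_le_mul_of_nonneg_left
      (Real.rpow_le_rpow (norm_nonneg x) hxball (by positivity)) (hDnn m)
  set Q : ℝ := (p:ℝ)^(N:ℤ) with hQ
  have hQ0 : 0 < Q := zpow_pos hp0 _
  set E : ℕ → ℝ := fun m => D m * Q ^ (α*(m:ℝ)) with hE
  have hEnn : ∀ m, 0 ≤ E m := fun m =>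
    mul_nonneg (hDnn m) (Real.rpow_nonneg hQ0.le _)
  set ρ : ℝ := (p:ℝ)^(-α) with hρ
  have hρ0 : 0 ≤ ρ := Real.rpow_nonneg hp0.le _
  have hρ1 : ρ < 1 := Real.rpow_lt_one_of_one_lt_of_neg hp1 (by linarith)
  set c : ℝ := M * A * Q ^ α with hc
  have hEstep : ∀ m : ℕ, E (m+1) = (c * ρ^m) * E m := by
    intro m
    rw [hE]
    simp only []
    rw [hDs]
    have e1 : Q ^ (α*((m+1:ℕ):ℝ)) = Q ^ (α*(m:ℝ)) * Q ^ α := by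
      rw [← Real.rpow_add hQ0]
      congr 1
      push_cast; ring
    have e2 : ρ^m = (p:ℝ) ^ (-(α*(m:ℝ))) := by
      rw [hρ, ← Real.rpow_natCast ((p:ℝ)^(-α)) m, ← Real.rpow_mul hp0.le]
      congr 1; ring
    rw [e1, e2, hc]
    ring
  have htend : Filter.Tendsto (fun m : ℕ => c * ρ^m) Filter.atTop (nhds 0) := by
    have := (tendsto_pow_atTop_nhds_zero_of_lt_one hρ0 hρ1).const_mul c
    simpa using this
  obtain ⟨m0, hm0⟩ := Filter.eventually_atTop.mp (htend.eventually (eventually_le_nhds (by norm_num : (0:ℝ) < 1/2)))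
  have hgeom : ∀ j : ℕ, E (m0 + j) ≤ E m0 * (1/2)^j := by
    intro j
    induction j with
    | zero => simp
    | succ j ih =>
        have : E (m0 + (j+1)) = (c * ρ^(m0+j)) * E (m0+j) := by
          rw [show m0 + (j+1) = (m0+j) + 1 by ring, hEstep]
        rw [this]
        have hr : c * ρ^(m0+j) ≤ 1/2 := hm0 _ (by omega)
        have hc0 : 0 < c := by
          rw [hc]
          have : 0 < Q ^ α := Real.rpow_pos_of_pos hQ0 α
          positivity
        calc (c * ρ^(m0+j)) * E (m0+j) ≤ (1/2) * (E m0 * (1/2)^j) := by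
              apply mul_le_mul hr ih (hEnn _)
              norm_num
          _ = E m0 * (1/2)^(j+1) := by ring
  have hwx0 : ‖w x‖ ≤ 0 := by
    have htend2 : Filter.Tendsto (fun j : ℕ => E m0 * (1/2:ℝ)^j) Filter.atTop (nhds 0) := by
      have := (tendsto_pow_atTop_nhds_zero_of_lt_one (by norm_num : (0:ℝ) ≤ 1/2)
        (by norm_num : (1/2:ℝ) < 1)).const_mul (E m0)
      simpa using this
    exact ge_of_tendsto' htend2 fun j => (hwx (m0+j)).trans (hgeom j)
  exact norm_le_zero_iff.mp hwx0
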